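/- Fix D > 0 and an integer M ≥ 1, and suppose n^M = 15/16, so a = 3/2 − n^M = 9/16. Then s = √(1 − 1/(2a)) = 1/3, the outer equilibrium of the travelling-wave fast subsystem is p₂ = (2 + 2s, 0) = (8/3, 0), and the c = 0 Hamiltonian H(E,w) = (1/2)w² − E²/(2D) + (2a/D)(E³/3 − E⁴/16) satisfies H(8/3, 0) = 0 = H(0,0); that is, the two saddle equilibria (0,0) and (8/3,0) lie on the same zero energy level. -/
import Mathlib

/-- For `n^M = 15/16` (so `a = 9/16`): `s = √(1 - 1/(2a)) = 1/3`, the outer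
equilibrium is `p₂ = (2 + 2s, 0) = (8/3, 0)`, and the `c = 0` Hamiltonian
`H(E,w) = w²/2 - E²/(2D) + (2a/D)(E³/3 - E⁴/16)` satisfies
`H(8/3, 0) = 0 = H(0,0)`: the two saddles lie on the same zero energy level. -/
theorem karma_double_heteroclinic_level (D : ℝ) (hD : 0 < D)
    (M : ℕ) (hM : 1 ≤ M) (n : ℝ) (hn : n ^ M = 15 / 16)
    (a : ℝ) (ha : a = 3 / 2 - n ^ M)
    (H : ℝ → ℝ → ℝ)
    (hH : ∀ E w, H E w = (1 / 2) * w ^ 2 - E ^ 2 / (2 * D)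
      + (2 * a / D) * (E ^ 3 / 3 - E ^ 4 / 16)) :
    a = 9 / 16 ∧
    Real.sqrt (1 - 1 / (2 * a)) = 1 / 3 ∧
    2 + 2 * Real.sqrt (1 - 1 / (2 * a)) = 8 / 3 ∧
    H (8 / 3) 0 = 0 ∧ H 0 0 = 0 := by
  have ha' : a = 9 / 16 := by rw [ha, hn]; norm_num
  have hs : Real.sqrt (1 - 1 / (2 * a)) = 1 / 3 := by
    rw [ha']
    rw [show (1 : ℝ) - 1 / (2 * (9/16)) = (1/3)^2 by norm_num]
    exact Real.sqrt_sq (by norm_num)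
  refine ⟨ha', hs, by rw [hs]; norm_num, ?_, ?_⟩ <;>
    rw [hH, ha'] <;> field_simp <;> ring
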